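/- arXiv:2501.00187 — 5 statements merged into one kernel-verified Lean document; each statement's English description precedes it below -/
import Mathlib

section
/- If S, I, R solve the classical SIR system S' = -bSI, I' = bSI - cI, R' = cI with S(0)=1, I(0)=d, R(0)=0 and S(t) > 0 for all t, then S satisfies the epidemic curve equation S' = -b·S·(1 + d - S + (c/b)·log S). -/
/-- Epidemic curve equation for the classical SIR model. -/
theorem sir_epidemic_curve (b c d : ℝ) (hb : 0 < b) (hc : 0 < c) (hd : 0 < d)
    (S I R : ℝ → ℝ)
    (hS : ∀ t, HasDerivAt S (-b * S t * I t) t)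
    (hI : ∀ t, HasDerivAt I (b * S t * I t - c * I t) t)
    (hR : ∀ t, HasDerivAt R (c * I t) t)
    (hS0 : S 0 = 1) (hI0 : I 0 = d) (hR0 : R 0 = 0)
    (hSpos : ∀ t, 0 < S t) :
    ∀ t, HasDerivAt S (-b * S t * (1 + d - S t + (c / b) * Real.log (S t))) t := by
  have hb' : b ≠ 0 := ne_of_gt hb
  -- N = S + I + R is constant = 1 + d
  have hN : ∀ t, HasDerivAt (fun t => S t + I t + R t) 0 t := by
    intro t
    have := ((hS t).add (hI t)).add (hR t)
    refine this.congr_deriv ?_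
    ring
  have hNconst : ∀ t, S t + I t + R t = 1 + d := by
    intro t
    have hdiff : Differentiable ℝ (fun t => S t + I t + R t) :=
      fun x => (hN x).differentiableAt
    have h := is_const_of_deriv_eq_zero hdiff (fun x => (hN x).deriv) t 0
    rw [h, hS0, hI0, hR0]
    ring
  -- H = R + (c/b) * log S is constant = 0
  have hH : ∀ t, HasDerivAt (fun t => R t + (c / b) * Real.log (S t)) 0 t := by
    intro t
    have hst : S t ≠ 0 := (hSpos t).ne'
    have hlog : HasDerivAt (fun t => Real.log (S t)) ((-b * S t * I t) / S t) t :=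
      (hS t).log hst
    have := (hR t).add (hlog.const_mul (c / b))
    refine this.congr_deriv ?_
    field_simp
    ring
  have hHconst : ∀ t, R t + (c / b) * Real.log (S t) = 0 := by
    intro t
    have hdiff : Differentiable ℝ (fun t => R t + (c / b) * Real.log (S t)) :=
      fun x => (hH x).differentiableAt
    have h := is_const_of_deriv_eq_zero hdiff (fun x => (hH x).deriv) t 0
    rw [h, hR0, hS0]
    simp
  intro t
  have hIt : I t = 1 + d - S t + (c / b) * Real.log (S t) := by
    have h1 := hNconst t
    have h2 := hHconst t
    linarith
  have h := hS t
  rw [hIt] at h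
  exact h
end

section
/- Suppose [S], [SS], [SI] : ℝ → ℝ satisfy [S]' = -β[SI] and [SS]' = -2βκ·[SI][SS]/[S], with [S] > 0 everywhere and initial condition [SS](0) = μ·[S](0)^{2κ}. Then [SS](t) = μ·[S](t)^{2κ} for all t ≥ 0. -/
/-- Closed pairwise SIR: `[SS](t) = μ [S](t)^(2κ)` for all `t ≥ 0`, given the initial
condition `[SS](0) = μ [S](0)^(2κ)`. -/
theorem pairwise_SS_formula (β κ μ : ℝ) (hβ : 0 < β) (hκ : 0 < κ) (hμ : 0 < μ)
    (S SS SI : ℝ → ℝ)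
    (hSpos : ∀ t, 0 < S t)
    (hS : ∀ t, 0 ≤ t → HasDerivAt S (-β * SI t) t)
    (hSS : ∀ t, 0 ≤ t → HasDerivAt SS (-2 * β * κ * SI t * SS t / S t) t)
    (hSS0 : SS 0 = μ * S 0 ^ (2 * κ)) :
    ∀ t, 0 ≤ t → SS t = μ * S t ^ (2 * κ) := by
  intro t ht
  set p : ℝ := 2 * κ with hp
  have hf : ∀ x, 0 ≤ x → HasDerivAt (fun y => SS y * S y ^ (-p)) 0 x := by
    intro x hx
    have hpos := hSpos x
    have hg : HasDerivAt (fun y => S y ^ (-p))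
        ((-β * SI x) * (-p) * S x ^ (-p - 1)) x :=
      (hS x hx).rpow_const (Or.inl hpos.ne')
    have h := (hSS x hx).mul hg
    refine h.congr_deriv (Eq.symm ?_)
    rw [Real.rpow_sub_one hpos.ne']
    field_simp
    ring
  have key : SS t * S t ^ (-p) = SS 0 * S 0 ^ (-p) := by
    have hc : ContinuousOn (fun y => SS y * S y ^ (-p)) (Set.Icc 0 t) := fun x hx =>
      ((hf x hx.1).continuousAt).continuousWithinAt
    exact constant_of_has_deriv_right_zero hc
      (fun x hx => (hf x hx.1).hasDerivWithinAt) t (Set.right_mem_Icc.mpr ht)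
  have hne : S t ^ (-p) ≠ 0 := (Real.rpow_pos_of_pos (hSpos t) _).ne'
  have h0 : SS 0 * S 0 ^ (-p) = μ := by
    rw [hSS0, mul_assoc, ← Real.rpow_add (hSpos 0)]
    simp
  rw [h0] at key
  have : S t ^ (-p) * S t ^ p = 1 := by
    rw [← Real.rpow_add (hSpos t)]; simp
  calc SS t = SS t * (S t ^ (-p) * S t ^ p) := by rw [this]; ring
    _ = (SS t * S t ^ (-p)) * S t ^ p := by ring
    _ = μ * S t ^ p := by rw [key]
end

section
/- In the Poisson case κ = 1: if S > 0 is differentiable, [SI] is differentiable, S' = -β[SI], [SS] = μS², and [SI]' = -γ[SI] + β[SI]([SS] - [SI])/S - β[SI], with [SI](0) = μρ·S(0) and S(0) = 1, then [SI](t) = μ·S(t)·(1 + ρ - S(t) + ((β+γ)/(μβ))·log S(t)) for all t ≥ 0, and consequently S satisfies S' = -μβ·S·(1 + ρ - S + ((β+γ)/(μβ))·log S). -/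
/-- Poisson case (`κ = 1`) of the closed pairwise SIR model: the explicit formula for
`[SI]` and the resulting epidemic curve equation for `S`. -/
theorem poisson_pairwise_SI_formula (β γ μ ρ : ℝ)
    (hβ : 0 < β) (hγ : 0 < γ) (hμ : 0 < μ) (hρ : 0 < ρ)
    (S SI : ℝ → ℝ)
    (hSpos : ∀ t, 0 < S t)
    (hS : ∀ t, 0 ≤ t → HasDerivAt S (-β * SI t) t)
    (hSI : ∀ t, 0 ≤ t → HasDerivAt SI
      (-γ * SI t + β * SI t * (μ * S t ^ 2 - SI t) / S t - β * SI t) t)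
    (hSI0 : SI 0 = μ * ρ * S 0) (hS0 : S 0 = 1) :
    ∀ t, 0 ≤ t →
      SI t = μ * S t * (1 + ρ - S t + ((β + γ) / (μ * β)) * Real.log (S t)) ∧
      HasDerivAt S
        (-(μ * β) * S t * (1 + ρ - S t + ((β + γ) / (μ * β)) * Real.log (S t))) t := by
  have hβ' : β ≠ 0 := ne_of_gt hβ
  have hμ' : μ ≠ 0 := ne_of_gt hμ
  set c : ℝ := (β + γ) / β with hc
  set φ : ℝ → ℝ := fun s => SI s / S s - c * Real.log (S s) + μ * S s with hφ
  have hφderiv : ∀ s, 0 ≤ s → HasDerivAt φ 0 s := by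
    intro s hs
    have hSs : S s ≠ 0 := ne_of_gt (hSpos s)
    have h1 : HasDerivAt (fun x => SI x / S x)
        (((-γ * SI s + β * SI s * (μ * S s ^ 2 - SI s) / S s - β * SI s) * S s
          - SI s * (-β * SI s)) / S s ^ 2) s :=
      (hSI s hs).div (hS s hs) hSs
    have h2 : HasDerivAt (fun x => Real.log (S x)) ((-β * SI s) / S s) s :=
      (hS s hs).log hSs
    have h := (h1.sub (h2.const_mul c)).add ((hS s hs).const_mul μ)
    refine h.congr_deriv ?_
    rw [hc]
    field_simp
    ring
  have hconst : ∀ s, 0 ≤ s → φ s = φ 0 := by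
    intro s hs
    exact constant_of_has_deriv_right_zero
      (fun x hx => (hφderiv x hx.1).continuousAt.continuousWithinAt)
      (fun x hx => (hφderiv x hx.1).hasDerivWithinAt) s ⟨hs, le_refl s⟩
  intro t ht
  have hSt : S t ≠ 0 := ne_of_gt (hSpos t)
  have h := hconst t ht
  simp only [hφ, hS0, hSI0, Real.log_one] at h
  have h2 : SI t / S t = μ * ρ + μ + c * Real.log (S t) - μ * S t := by
    norm_num at h; linarith
  have h3 : SI t = (μ * ρ + μ + c * Real.log (S t) - μ * S t) * S t := by
    rw [← h2, div_mul_cancel₀ _ hSt]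
  have hform : SI t = μ * S t * (1 + ρ - S t + ((β + γ) / (μ * β)) * Real.log (S t)) := by
    rw [h3, hc]; field_simp; ring
  refine ⟨hform, ?_⟩
  have hd := hS t ht
  convert hd using 1
  rw [hform]; ring
end

section
/- Suppose S solves S' = -β̃·S·G(S) on [0,∞) with G(S) = 1 + ρ - S + R̃₀⁻¹ log S, S(0) = 1, β̃ > 0, ρ > 0, R̃₀ > 1, and S∞ ∈ (0,1) is the unique zero of G. Then S is strictly decreasing and S(t) > S∞ for all t ≥ 0. -/
/-- Solutions of the Poisson epidemic curve equation are strictly decreasing and stay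
above the unique zero `S∞` of `G`. -/
theorem S_decreasing_above_Sinf (βt ρ R0 Sinf : ℝ)
    (hβt : 0 < βt) (hρ : 0 < ρ) (hR0 : 1 < R0)
    (hSinf : Sinf ∈ Set.Ioo (0 : ℝ) 1)
    (hzero : 1 + ρ - Sinf + R0⁻¹ * Real.log Sinf = 0)
    (huniq : ∀ x ∈ Set.Ioo (0 : ℝ) 1, 1 + ρ - x + R0⁻¹ * Real.log x = 0 → x = Sinf)
    (S : ℝ → ℝ)
    (hrange : ∀ t, 0 ≤ t → S t ∈ Set.Ioc (0 : ℝ) 1)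
    (hS0 : S 0 = 1)
    (hS : ∀ t, 0 ≤ t →
      HasDerivAt S (-βt * S t * (1 + ρ - S t + R0⁻¹ * Real.log (S t))) t) :
    StrictAntiOn S (Set.Ici (0 : ℝ)) ∧ ∀ t, 0 ≤ t → Sinf < S t := by
  obtain ⟨hSinf0, hSinf1⟩ := hSinf
  have hR0' : 0 < R0⁻¹ := inv_pos.mpr (lt_trans one_pos hR0)
  have hScont : ∀ t, 0 ≤ t → ContinuousAt S t := fun t ht => (hS t ht).continuousAt
  -- the Lipschitz constant
  set L : ℝ := βt * R0⁻¹ / Sinf with hLdef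
  have hL : 0 < L := by positivity
  -- key inequality : for Sinf < x ≤ 1, βt x G x ≤ L (x - Sinf)
  have hkey : ∀ x : ℝ, Sinf < x → x ≤ 1 →
      βt * x * (1 + ρ - x + R0⁻¹ * Real.log x) ≤ L * (x - Sinf) := by
    intro x hx1 hx2
    have hx0 : 0 < x := lt_trans hSinf0 hx1
    have hlog : Real.log x - Real.log Sinf ≤ (x - Sinf) / Sinf := by
      have h1 : Real.log (x / Sinf) ≤ x / Sinf - 1 :=
        Real.log_le_sub_one_of_pos (by positivity)
      rw [Real.log_div (ne_of_gt hx0) (ne_of_gt hSinf0)] at h1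
      have : x / Sinf - 1 = (x - Sinf) / Sinf := by field_simp
      linarith [h1, this.le, this.ge]
    have hGle : 1 + ρ - x + R0⁻¹ * Real.log x ≤ R0⁻¹ * ((x - Sinf) / Sinf) := by
      have heq : 1 + ρ - x + R0⁻¹ * Real.log x
          = -(x - Sinf) + R0⁻¹ * (Real.log x - Real.log Sinf) := by
        linear_combination hzero
      rw [heq]
      have h2 : R0⁻¹ * (Real.log x - Real.log Sinf) ≤ R0⁻¹ * ((x - Sinf) / Sinf) :=
        mul_le_mul_of_nonneg_left hlog (le_of_lt hR0')
      nlinarith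
    by_cases hG : 1 + ρ - x + R0⁻¹ * Real.log x ≤ 0
    · have h1 : βt * x * (1 + ρ - x + R0⁻¹ * Real.log x) ≤ 0 :=
        mul_nonpos_of_nonneg_of_nonpos (by positivity) hG
      have h2 : 0 ≤ L * (x - Sinf) := mul_nonneg hL.le (by linarith)
      linarith
    · push_neg at hG
      have h1 : βt * x * (1 + ρ - x + R0⁻¹ * Real.log x)
          ≤ βt * (1 + ρ - x + R0⁻¹ * Real.log x) := by
        nlinarith [mul_nonneg (mul_pos hβt hG).le (sub_nonneg.mpr hx2)]
      have h2 : βt * (1 + ρ - x + R0⁻¹ * Real.log x)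
          ≤ βt * (R0⁻¹ * ((x - Sinf) / Sinf)) :=
        mul_le_mul_of_nonneg_left hGle hβt.le
      have h3 : βt * (R0⁻¹ * ((x - Sinf) / Sinf)) = L * (x - Sinf) := by
        rw [hLdef]; field_simp
      linarith
  -- part 2 : S stays above Sinf
  have hmain : ∀ t, 0 ≤ t → Sinf < S t := by
    by_contra h
    push_neg at h
    obtain ⟨t0, ht0, hle⟩ := h
    set A : Set ℝ := {t : ℝ | 0 ≤ t ∧ S t ≤ Sinf} with hAdef
    have hAclosed : IsClosed A := by
      apply IsSeqClosed.isClosed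
      intro u p hu hup
      have hp0 : 0 ≤ p := ge_of_tendsto hup (Filter.Eventually.of_forall fun n => (hu n).1)
      refine ⟨hp0, ?_⟩
      have htend : Filter.Tendsto (fun n => S (u n)) Filter.atTop (nhds (S p)) :=
        ((hScont p hp0).tendsto.comp hup)
      exact le_of_tendsto htend (Filter.Eventually.of_forall fun n => (hu n).2)
    have hAne : A.Nonempty := ⟨t0, ht0, hle⟩
    have hAbdd : BddBelow A := ⟨0, fun x hx => hx.1⟩
    set T := sInf A with hTdef
    have hTA : T ∈ A := hAclosed.csInf_mem hAne hAbdd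
    have hT0 : 0 ≤ T := hTA.1
    have hTS : S T ≤ Sinf := hTA.2
    have hnotA : ∀ t, 0 ≤ t → t < T → Sinf < S t := by
      intro t ht htT
      by_contra hc
      push_neg at hc
      exact absurd (csInf_le hAbdd ⟨ht, hc⟩) (not_le.mpr htT)
    -- the auxiliary function g
    set g : ℝ → ℝ := fun t => (S t - Sinf) * Real.exp (L * t) with hgdef
    have hder : ∀ x, 0 ≤ x → HasDerivAt g
        ((-βt * S x * (1 + ρ - S x + R0⁻¹ * Real.log (S x))) * Real.exp (L * x)
          + (S x - Sinf) * (Real.exp (L * x) * L)) x := by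
      intro x hx
      have h1 : HasDerivAt (fun t => S t - Sinf)
          (-βt * S x * (1 + ρ - S x + R0⁻¹ * Real.log (S x))) x := (hS x hx).sub_const Sinf
      have h2 : HasDerivAt (fun t : ℝ => Real.exp (L * t)) (Real.exp (L * x) * L) x := by
        have h3 : HasDerivAt (fun t : ℝ => L * t) L x := by
          simpa using (hasDerivAt_id x).const_mul L
        exact (Real.hasDerivAt_exp (L * x)).comp x h3
      exact h1.mul h2
    have hgmono : MonotoneOn g (Set.Icc 0 T) := by
      apply monotoneOn_of_deriv_nonneg (convex_Icc 0 T)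
      · intro t ht
        exact ((hder t ht.1).continuousAt).continuousWithinAt
      · intro t ht
        rw [interior_Icc] at ht
        exact ((hder t ht.1.le).differentiableAt).differentiableWithinAt
      · intro t ht
        rw [interior_Icc] at ht
        rw [(hder t ht.1.le).deriv]
        have hSt1 : Sinf < S t := hnotA t ht.1.le ht.2
        have hSt2 : S t ≤ 1 := (hrange t ht.1.le).2
        have hk := hkey (S t) hSt1 hSt2
        have hexp : 0 < Real.exp (L * t) := Real.exp_pos _
        nlinarith [hk, hexp]
    have hg0 : g 0 = 1 - Sinf := by
      simp [hgdef, hS0]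
    have hgT : g T ≤ 0 :=
      mul_nonpos_of_nonpos_of_nonneg (by linarith) (Real.exp_pos _).le
    have h01 : g 0 ≤ g T :=
      hgmono (Set.left_mem_Icc.mpr hT0) (Set.right_mem_Icc.mpr hT0) hT0
    rw [hg0] at h01
    linarith
  -- positivity of G on (Sinf, 1]
  have hGpos : ∀ x : ℝ, Sinf < x → x ≤ 1 → 0 < 1 + ρ - x + R0⁻¹ * Real.log x := by
    intro x hx1 hx2
    have hx0 : 0 < x := lt_trans hSinf0 hx1
    rcases eq_or_lt_of_le hx2 with heq | hlt
    · rw [heq]; simp [Real.log_one]; linarith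
    · by_contra hc
      push_neg at hc
      have hcont : ContinuousOn (fun y => 1 + ρ - y + R0⁻¹ * Real.log y) (Set.Icc x 1) := by
        apply ContinuousOn.add
        · exact (continuous_const.sub continuous_id).continuousOn
        · apply ContinuousOn.mul continuousOn_const
          apply Real.continuousOn_log.mono
          intro y hy
          simp only [Set.mem_compl_iff, Set.mem_singleton_iff]
          exact ne_of_gt (lt_of_lt_of_le hx0 hy.1)
      have hG1 : (1:ℝ) + ρ - 1 + R0⁻¹ * Real.log 1 = ρ := by simp [Real.log_one]
      have hmem : (0:ℝ) ∈ Set.Icc (1 + ρ - x + R0⁻¹ * Real.log x)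
          (1 + ρ - 1 + R0⁻¹ * Real.log 1) := by
        constructor
        · exact hc
        · rw [hG1]; linarith
      obtain ⟨c, hcmem, hcval⟩ := intermediate_value_Icc hx2 hcont hmem
      have hcval' : 1 + ρ - c + R0⁻¹ * Real.log c = 0 := hcval
      have hc1 : c < 1 := by
        rcases lt_or_eq_of_le hcmem.2 with h | h
        · exact h
        · exfalso; rw [h] at hcval'; simp [Real.log_one] at hcval'; linarith
      have hc0 : 0 < c := lt_of_lt_of_le hx0 hcmem.1
      have heqc : c = Sinf := huniq c ⟨hc0, hc1⟩ hcval'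
      have hgt : Sinf < c := lt_of_lt_of_le hx1 hcmem.1
      rw [heqc] at hgt
      exact lt_irrefl _ hgt
  constructor
  · apply strictAntiOn_of_deriv_neg (convex_Ici 0)
    · intro t ht
      exact ((hScont t ht)).continuousWithinAt
    · intro t ht
      rw [interior_Ici] at ht
      have ht' : (0:ℝ) ≤ t := le_of_lt ht
      rw [(hS t ht').deriv]
      have h1 : Sinf < S t := hmain t ht'
      have h2 : S t ≤ 1 := (hrange t ht').2
      have h3 : 0 < S t := (hrange t ht').1
      have h4 := hGpos (S t) h1 h2
      nlinarith [mul_pos (mul_pos hβt h3) h4]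
  · exact hmain
end

section
/- For the general closed pairwise system with κ ≠ 1: if S > 0 solves S' = -β[SI] with [SS] = μS^{2κ} and [SI]' = -γ[SI] + βκ[SI]([SS]-[SI])/S - β[SI], [SI](0) = μρ, S(0) = 1, then [SI](t) = μ·(β̃(S^κ - S^{2κ}) + (γ̃/(1-κ))·S·(1 - S^{κ-1}) + ρ̃·S^κ)/β̃ where β̃ = μβ, γ̃ = β + γ, ρ̃ = βμρ; equivalently -S' = β̃(S^κ - S^{2κ}) + (γ̃/(1-κ))S(1 - S^{κ-1}) + ρ̃ S^κ. -/
open Real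

/-- General closed pairwise SIR system with `κ ≠ 1`: explicit formula for `[SI]` and the
resulting epidemic curve equation. -/
theorem general_pairwise_SI_formula (β γ μ ρ κ : ℝ)
    (hβ : 0 < β) (hγ : 0 < γ) (hμ : 0 < μ) (hρ : 0 < ρ) (hκ : 0 < κ) (hκ1 : κ ≠ 1)
    (S SI : ℝ → ℝ)
    (hSpos : ∀ t, 0 < S t)
    (hS0 : S 0 = 1) (hSI0 : SI 0 = μ * ρ)
    (hS : ∀ t, 0 ≤ t → HasDerivAt S (-β * SI t) t)
    (hSI : ∀ t, 0 ≤ t → HasDerivAt SI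
      (-γ * SI t + β * κ * SI t * (μ * S t ^ (2 * κ) - SI t) / S t - β * SI t) t) :
    ∀ t, 0 ≤ t →
      SI t = μ * ((μ * β) * (S t ^ κ - S t ^ (2 * κ))
          + ((β + γ) / (1 - κ)) * S t * (1 - S t ^ (κ - 1))
          + (β * μ * ρ) * S t ^ κ) / (μ * β) ∧
      HasDerivAt S (-((μ * β) * (S t ^ κ - S t ^ (2 * κ))
          + ((β + γ) / (1 - κ)) * S t * (1 - S t ^ (κ - 1))
          + (β * μ * ρ) * S t ^ κ)) t := by
  have hβ' : (β : ℝ) ≠ 0 := hβ.ne'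
  have hμ' : (μ : ℝ) ≠ 0 := hμ.ne'
  have hκ1' : (1 : ℝ) - κ ≠ 0 := sub_ne_zero.mpr (Ne.symm hκ1)
  set c : ℝ := (β + γ) / (β * (1 - κ)) with hc
  set Φ : ℝ → ℝ := fun u => SI u * (S u) ^ (-κ)
      - (μ - μ * (S u) ^ κ + c * (S u) ^ (1 - κ) + μ * ρ - c) with hΦdef
  have hderiv : ∀ x, 0 ≤ x → HasDerivAt Φ 0 x := by
    intro x hx
    have hs : 0 < S x := hSpos x
    have hp : 0 < S x ^ κ := Real.rpow_pos_of_pos hs κ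
    have hS' := hS x hx
    have hSI' := hSI x hx
    have d1 : HasDerivAt (fun u => (S u) ^ (-κ))
        ((-β * SI x) * (-κ) * S x ^ (-κ - 1)) x := hS'.rpow_const (Or.inl hs.ne')
    have d2 : HasDerivAt (fun u => (S u) ^ κ)
        ((-β * SI x) * κ * S x ^ (κ - 1)) x := hS'.rpow_const (Or.inl hs.ne')
    have d3 : HasDerivAt (fun u => (S u) ^ (1 - κ))
        ((-β * SI x) * (1 - κ) * S x ^ (1 - κ - 1)) x := hS'.rpow_const (Or.inl hs.ne')
    have dΦ := (hSI'.mul d1).sub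
      (((((d2.const_mul μ).const_sub μ).add (d3.const_mul c)).add_const (μ * ρ)).sub_const c)
    refine dΦ.congr_deriv ?_
    symm
    have h2κ : S x ^ (2 * κ) = S x ^ κ * S x ^ κ := by rw [two_mul, Real.rpow_add hs]
    have hnegκ : S x ^ (-κ) = (S x ^ κ)⁻¹ := by rw [Real.rpow_neg hs.le]
    have hκm1 : S x ^ (κ - 1) = S x ^ κ / S x := by rw [Real.rpow_sub hs, Real.rpow_one]
    have hnegκ1 : S x ^ (-κ - 1) = (S x ^ κ)⁻¹ / S x := by
      rw [Real.rpow_sub hs, Real.rpow_one, Real.rpow_neg hs.le]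
    have h1κ : (1 : ℝ) - κ - 1 = -κ := by ring
    rw [h2κ, hnegκ, hκm1, hnegκ1, h1κ, hnegκ, hc]
    field_simp
    ring
  have hΦ0 : Φ 0 = 0 := by
    simp only [hΦdef, hS0, hSI0, Real.one_rpow]
    ring
  intro t ht
  have hΦt : Φ t = 0 := by
    have := constant_of_has_deriv_right_zero
      (f := Φ) (a := 0) (b := t)
      (fun x hx => (hderiv x hx.1).continuousAt.continuousWithinAt)
      (fun x hx => (hderiv x hx.1).hasDerivWithinAt)
      t (Set.right_mem_Icc.mpr ht)
    rw [this, hΦ0]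
  have hs : 0 < S t := hSpos t
  have hp : 0 < S t ^ κ := Real.rpow_pos_of_pos hs κ
  have h2κ : S t ^ (2 * κ) = S t ^ κ * S t ^ κ := by rw [two_mul, Real.rpow_add hs]
  have hnegκ : S t ^ (-κ) = (S t ^ κ)⁻¹ := by rw [Real.rpow_neg hs.le]
  have hκm1 : S t ^ (κ - 1) = S t ^ κ / S t := by rw [Real.rpow_sub hs, Real.rpow_one]
  have h1κ : S t ^ (1 - κ) = S t / S t ^ κ := by rw [Real.rpow_sub hs, Real.rpow_one]
  have hSIeq : SI t = μ * ((μ * β) * (S t ^ κ - S t ^ (2 * κ))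
      + ((β + γ) / (1 - κ)) * S t * (1 - S t ^ (κ - 1))
      + (β * μ * ρ) * S t ^ κ) / (μ * β) := by
    have h0 : SI t * (S t) ^ (-κ)
        = μ - μ * (S t) ^ κ + c * (S t) ^ (1 - κ) + μ * ρ - c := by
      have := hΦt
      simp only [hΦdef] at this
      linarith
    rw [hnegκ, h1κ] at h0
    rw [mul_inv_eq_iff_eq_mul₀ hp.ne'] at h0
    rw [h0, h2κ, hκm1, hc]
    field_simp
    ring
  refine ⟨hSIeq, ?_⟩
  have hval : -((μ * β) * (S t ^ κ - S t ^ (2 * κ))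
      + ((β + γ) / (1 - κ)) * S t * (1 - S t ^ (κ - 1))
      + (β * μ * ρ) * S t ^ κ) = -β * SI t := by
    rw [hSIeq]
    field_simp
  rw [hval]
  exact hS t ht
end
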